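/- The box of Example 2 admits no LHV-LHS decomposition with hidden variable dimension 2 of the form P(ab|xy) = q·P_D^{α₀β₀}(a|x)Q₀(b|y) + (1-q)·P_D^{α₁β₁}(a|x)Q₁(b|y) with deterministic Alice boxes and arbitrary single-party distributions Q₀, Q₁: for every choice of two deterministic Alice boxes and weight q ∈ (0,1), some entry of the box cannot be matched. -/

import Mathlib

open Finset

/-- The box of Example 2. -/
noncomputable def PEx2 (a b x y : Fin 2) : ℝ :=
  if x = y then (if a = 0 ∧ b = 0 then 5 / 8 else 1 / 8)
  else (if a = 0 ∧ b = 0 then 1 / 2 else if a = 1 ∧ b = 1 then 0 else 1 / 4)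

/-- Single-party deterministic box P_D^{αβ}. -/
def PD (α β : Fin 2) (a x : Fin 2) : ℝ :=
  if a = α * x + β then 1 else 0

/-- The Example 2 box admits no dimension-2 LHV-LHS decomposition with deterministic
Alice boxes and arbitrary single-party distributions on Bob's side. -/
theorem ex2_no_dim2_decomposition :
    ¬ ∃ (q : ℝ) (α₀ β₀ α₁ β₁ : Fin 2) (Q₀ Q₁ : Fin 2 → Fin 2 → ℝ),
        0 < q ∧ q < 1 ∧
        (∀ y b, 0 ≤ Q₀ y b) ∧ (∀ y, ∑ b : Fin 2, Q₀ y b = 1) ∧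
        (∀ y b, 0 ≤ Q₁ y b) ∧ (∀ y, ∑ b : Fin 2, Q₁ y b = 1) ∧
        (∀ a b x y : Fin 2,
          PEx2 a b x y
            = q * PD α₀ β₀ a x * Q₀ y b + (1 - q) * PD α₁ β₁ a x * Q₁ y b) := by
  rintro ⟨q, α₀, β₀, α₁, β₁, Q₀, Q₁, hq, hq1, _, _, _, _, h⟩
  have e1 := h 0 0 0 0
  have e2 := h 0 0 1 0
  have e3 := h 1 0 0 0
  have e4 := h 1 0 1 0
  fin_cases α₀ <;> fin_cases β₀ <;> fin_cases α₁ <;> fin_cases β₁ <;>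
    revert e1 e2 e3 e4 <;>
    norm_num [PEx2, PD, Fin.ext_iff, show ((2:Fin 2):ℕ) = 0 from rfl] <;>
    intros <;> linarith
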